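/- Let φ : [0,1] → ℝ be twice continuously differentiable. Then there exists C > 0 (depending only on φ) such that for all n ≥ 1 and all 1 ≤ m ≤ n, |Σ_{1≤ℓ≤m} λ*_{n,m,ℓ}·(φ(m/n) − φ((m−ℓ)/n)) − (φ'(m/n)/n)·Σ_{1≤ℓ≤m} ℓ·λ*_{n,m,ℓ}| ≤ C·n^{−2}. -/

import Mathlib

open Filter MeasureTheory Real

namespace EA

/-- The transition probability `λ_{n,m,ℓ}`. -/
noncomputable def lam (n m ℓ : ℕ) : ℝ :=
  (1 - 1/(n:ℝ))^n * ((n:ℝ) - 1)^(-(ℓ:ℤ)) *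
    ∑ j ∈ Finset.range (min (n - m) (m - ℓ) + 1),
      ((n - m).choose j : ℝ) * (m.choose (j + ℓ) : ℝ) * ((n:ℝ) - 1)^(-(2*(j:ℤ)))

/-- `Λ_{n,m} = Σ_{1 ≤ ℓ ≤ m} λ_{n,m,ℓ}`. -/
noncomputable def Lam (n m : ℕ) : ℝ := ∑ ℓ ∈ Finset.range m, lam n m (ℓ + 1)

/-- The probability generating function `P_{n,m}(t)` of `X_{n,m}`. -/
noncomputable def Pgen (n : ℕ) : ℕ → ℝ → ℝ
  | 0, _ => 1
  | (m+1), t =>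
      (t * ∑ ℓ ∈ Finset.range (m+1), lam n (m+1) (ℓ+1) * Pgen n (m - ℓ) t) /
        (1 - (1 - Lam n (m+1)) * t)
  decreasing_by exact Nat.lt_succ_of_le (Nat.sub_le m ℓ)

/-- The entire function `S_r(z)`. -/
noncomputable def S (r : ℕ) (z : ℝ) : ℝ :=
  ∑' ℓ : ℕ, (z^(ℓ+1) / (Nat.factorial (ℓ+1) : ℝ)) *
    ∑ j ∈ Finset.range (ℓ+1), ((ℓ + 1 - j : ℕ) : ℝ)^r * (1 - z)^j / (Nat.factorial j : ℝ)

/-- Harmonic numbers `H_m`. -/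
noncomputable def Hm (m : ℕ) : ℝ := ∑ j ∈ Finset.range m, 1/((j:ℝ)+1)

/-- Second-order harmonic numbers `H_m^{(2)}`. -/
noncomputable def Hm2 (m : ℕ) : ℝ := ∑ j ∈ Finset.range m, 1/((j:ℝ)+1)^2

/-- `φ₁(z) = ∫_0^z (1/S₁(t) - 1/t) dt`. -/
noncomputable def phi1 (z : ℝ) : ℝ := ∫ t in (0:ℝ)..z, (1 / S 1 t - 1 / t)

/-- `φ₂(z)`. -/
noncomputable def phi2 (z : ℝ) : ℝ :=
  1/2 - ∫ x in (0:ℝ)..z,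
    (S 2 x * deriv (S 1) x / (2 * (S 1 x)^3) - S 0 x / (S 1 x)^2
      - 1/(2 * S 1 x) - 1/(2*x^2) + 1/x)

/-- `ψ₁(z)`. -/
noncomputable def psi1 (z : ℝ) : ℝ :=
  ∫ x in (0:ℝ)..z, (S 2 x / (S 1 x)^3 - 1/x^2 + 2/x)

/-- `ψ₂(z)`. -/
noncomputable def psi2 (z : ℝ) : ℝ :=
  7/12 - ∫ x in (0:ℝ)..z,
    (5 * deriv (S 1) x * (S 2 x)^2 / (2*(S 1 x)^5)
      - (2 * deriv (S 1) x * S 3 x + S 2 x * deriv (S 2) x + 6 * S 0 x * S 2 x) / (2*(S 1 x)^4)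
      - S 0 x / (S 1 x)^3 + 2/(S 1 x)^2 - 1/x^3 + 3/x^2 - 11/(2*x))

/-- The mean sequence `μ_{n,m}`. -/
noncomputable def mu (n : ℕ) : ℕ → ℝ
  | 0 => 0
  | (m+1) =>
      (1 + ∑ ℓ ∈ Finset.range (m+1), lam n (m+1) (ℓ+1) * mu n (m - ℓ)) / Lam n (m+1)
  decreasing_by exact Nat.lt_succ_of_le (Nat.sub_le m ℓ)

/-- The variance sequence `σ²_{n,m}`, the unique solution of
`Σ_{1≤ℓ≤m} λ_{n,m,ℓ}(σ²_{n,m} − σ²_{n,m−ℓ}) = −1 + Σ_{1≤ℓ≤m} λ_{n,m,ℓ}(μ_{n,m} − μ_{n,m−ℓ})²`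
with `σ²_{n,0} = 0`. -/
noncomputable def varX (n : ℕ) : ℕ → ℝ
  | 0 => 0
  | (m+1) =>
      (-1 + ∑ ℓ ∈ Finset.range (m+1), lam n (m+1) (ℓ+1) *
          (varX n (m - ℓ) + (mu n (m+1) - mu n (m - ℓ))^2)) / Lam n (m+1)
  decreasing_by exact Nat.lt_succ_of_le (Nat.sub_le m ℓ)

/-- The normalized transition probability `λ*_{n,m,ℓ}`. -/
noncomputable def lamStar (n m ℓ : ℕ) : ℝ :=
  ∑ j ∈ Finset.range (min (n + 1 - m) (m - ℓ) + 1),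
    ((n + 1 - m).choose j : ℝ) * (m.choose (j + ℓ) : ℝ) * (n:ℝ)^(-((ℓ:ℤ) + 2*j))

/-- The probability generating function `Q_{n,m}` for LeadingOnes. -/
noncomputable def QLO (p : ℝ) (n : ℕ) : ℕ → ℝ → ℝ
  | 0, _ => 1
  | (m+1), t =>
      (p * (1-p)^(n-(m+1)) * t / (1 - (1 - p*(1-p)^(n-(m+1))) * t)) *
        ((2:ℝ)^(-(m:ℤ)) + ∑ ℓ ∈ Finset.range m, QLO p n (m-ℓ) t / 2^(ℓ+1))
  decreasing_by exact Nat.lt_succ_of_le (Nat.sub_le m ℓ)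

/-- The mean `ν_{n,m}` of `Y_{n,m}` (LeadingOnes). -/
noncomputable def nuLO (p : ℝ) (n : ℕ) : ℕ → ℝ
  | 0 => 0
  | (m+1) =>
      1/(p*(1-p)^(n-(m+1))) + ∑ ℓ ∈ Finset.range m, nuLO p n (m-ℓ) / 2^(ℓ+1)
  decreasing_by exact Nat.lt_succ_of_le (Nat.sub_le m ℓ)

/-- The second moment `s_{n,m}` of `Y_{n,m}` (LeadingOnes). -/
noncomputable def sLO (p : ℝ) (n : ℕ) : ℕ → ℝ
  | 0 => 0
  | (m+1) =>
      (2 * nuLO p n (m+1) - 1)/(p*(1-p)^(n-(m+1)))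
        + ∑ ℓ ∈ Finset.range m, sLO p n (m-ℓ) / 2^(ℓ+1)
  decreasing_by exact Nat.lt_succ_of_le (Nat.sub_le m ℓ)




lemma taylor_bound (φ : ℝ → ℝ) (hφ : ContDiffOn ℝ 2 φ (Set.Icc 0 1)) :
    ∃ K : ℝ, 0 < K ∧ ∀ x ∈ Set.Icc (0:ℝ) 1, ∀ y ∈ Set.Icc (0:ℝ) 1, y ≤ x →
      |φ x - φ y - derivWithin φ (Set.Icc 0 1) x * (x - y)| ≤ K * (x - y)^2 := by
  set s : Set ℝ := Set.Icc (0:ℝ) 1 with hs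
  have hu : UniqueDiffOn ℝ s := uniqueDiffOn_Icc zero_lt_one
  have hφ' : ContDiffOn ℝ 1 (derivWithin φ s) s := hφ.derivWithin hu (by norm_num)
  have hcont2 : ContinuousOn (derivWithin (derivWithin φ s) s) s :=
    hφ'.continuousOn_derivWithin hu le_rfl
  obtain ⟨K₂, hK₂⟩ := (isCompact_Icc (a := (0:ℝ)) (b := 1)).exists_bound_of_continuousOn hcont2
  set K := max K₂ 1 with hKdef
  refine ⟨K, lt_of_lt_of_le one_pos (le_max_right _ _), ?_⟩
  have hlip : ∀ a ∈ s, ∀ b ∈ s, |derivWithin φ s a - derivWithin φ s b| ≤ K * |a - b| := by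
    intro a ha b hb
    have := (convex_Icc (0:ℝ) 1).norm_image_sub_le_of_norm_derivWithin_le (C := K)
      (hφ'.differentiableOn one_ne_zero)
      (fun z hz => le_trans (hK₂ z hz) (le_max_left _ _)) hb ha
    simpa [Real.norm_eq_abs] using this
  intro x hx y hy hyx
  rcases eq_or_lt_of_le hyx with h | h
  · subst h; simp
  · have hcontφ : ContinuousOn φ (Set.Icc y x) :=
      hφ.continuousOn.mono (Set.Icc_subset_Icc hy.1 hx.2)
    have hderiv : ∀ ξ ∈ Set.Ioo y x, HasDerivAt φ (derivWithin φ s ξ) ξ := by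
      intro ξ hξ
      have hξs : ξ ∈ s := ⟨le_of_lt (lt_of_le_of_lt hy.1 hξ.1), le_of_lt (lt_of_lt_of_le hξ.2 hx.2)⟩
      have hmem : s ∈ nhds ξ :=
        Icc_mem_nhds (lt_of_le_of_lt hy.1 hξ.1) (lt_of_lt_of_le hξ.2 hx.2)
      exact ((hφ.differentiableOn (by norm_num) ξ hξs).hasDerivWithinAt).hasDerivAt hmem
    obtain ⟨ξ, hξ, hslope⟩ := exists_hasDerivAt_eq_slope φ (derivWithin φ s) h hcontφ hderiv
    have hξs : ξ ∈ s := ⟨le_trans hy.1 (le_of_lt hξ.1), le_trans (le_of_lt hξ.2) hx.2⟩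
    have hxy : φ x - φ y = derivWithin φ s ξ * (x - y) := by
      rw [hslope, div_mul_cancel₀ _ (by linarith : x - y ≠ 0)]
    rw [hxy]
    have : derivWithin φ s ξ * (x - y) - derivWithin φ s x * (x - y)
        = (derivWithin φ s ξ - derivWithin φ s x) * (x - y) := by ring
    rw [this, abs_mul, abs_of_pos (by linarith : (0:ℝ) < x - y)]
    have h1 : |derivWithin φ s ξ - derivWithin φ s x| ≤ K * (x - y) := by
      refine le_trans (hlip ξ hξs x hx) ?_
      obtain ⟨hξ1, hξ2⟩ := hξ
      have : |ξ - x| ≤ x - y := by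
        rw [abs_sub_comm, abs_of_pos (by linarith)]; linarith
      nlinarith [le_max_right K₂ 1]
    calc |derivWithin φ s ξ - derivWithin φ s x| * (x - y) ≤ (K * (x - y)) * (x - y) :=
          mul_le_mul_of_nonneg_right h1 (by linarith)
      _ = K * (x - y)^2 := by ring


lemma lamStar_nonneg (n m ℓ : ℕ) : 0 ≤ lamStar n m ℓ := by
  apply Finset.sum_nonneg
  intro j _
  have : (0:ℝ) ≤ (n:ℝ)^(-((ℓ:ℤ) + 2*(j:ℤ))) := zpow_nonneg (Nat.cast_nonneg n) _
  positivity

lemma lamStar_le (n m ℓ : ℕ) (hm : 1 ≤ m) (hmn : m ≤ n) :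
    lamStar n m (ℓ+1) ≤ 3 / ((ℓ+1).factorial : ℝ) := by
  have hn1 : 1 ≤ n := le_trans hm hmn
  have hnpos : (0:ℝ) < n := by exact_mod_cast hn1
  set N := min (n + 1 - m) (m - (ℓ+1)) + 1
  have hterm : ∀ j ∈ Finset.range N,
      ((n + 1 - m).choose j : ℝ) * (m.choose (j + (ℓ+1)) : ℝ) * (n:ℝ)^(-((((ℓ+1:ℕ)):ℤ) + 2*(j:ℤ)))
        ≤ (1:ℝ)^j / (j.factorial : ℝ) * (1 / ((ℓ+1).factorial : ℝ)) := by
    intro j _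
    have hc1 : ((n + 1 - m).choose j : ℝ) ≤ (n:ℝ)^j / (j.factorial : ℝ) := by
      refine le_trans (Nat.choose_le_pow_div j (n+1-m)) ?_
      gcongr
      exact_mod_cast (by omega : n + 1 - m ≤ n)
    have hmn' : (m:ℝ) ≤ (n:ℝ) := by exact_mod_cast hmn
    have hc2 : ((m.choose (j + (ℓ+1))) : ℝ) ≤ (n:ℝ)^(j+(ℓ+1)) / ((j+(ℓ+1)).factorial : ℝ) := by
      refine le_trans (Nat.choose_le_pow_div (j+(ℓ+1)) m) ?_
      gcongr
    have hzp : (n:ℝ)^(-((((ℓ+1:ℕ)):ℤ) + 2*(j:ℤ))) = ((n:ℝ)^(ℓ+1+2*j))⁻¹ := by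
      rw [show -((((ℓ+1:ℕ)):ℤ) + 2*(j:ℤ)) = -((ℓ+1+2*j : ℕ) : ℤ) by push_cast; ring,
        zpow_neg, zpow_natCast]
    rw [hzp]
    have hpowmul : (n:ℝ)^j * (n:ℝ)^(j+(ℓ+1)) = (n:ℝ)^(ℓ+1+2*j) := by
      rw [← pow_add, show j + (j+(ℓ+1)) = ℓ+1+2*j from by omega]
    have hfle : ((ℓ+1).factorial : ℝ) ≤ ((j+(ℓ+1)).factorial : ℝ) :=
      by exact_mod_cast Nat.factorial_le (by omega : ℓ+1 ≤ j+(ℓ+1))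
    have hfj : (0:ℝ) < (j.factorial : ℝ) := by exact_mod_cast j.factorial_pos
    have hfl : (0:ℝ) < ((ℓ+1).factorial : ℝ) := by exact_mod_cast (ℓ+1).factorial_pos
    have hfjl : (0:ℝ) < ((j+(ℓ+1)).factorial : ℝ) := by exact_mod_cast (j+(ℓ+1)).factorial_pos
    calc ((n + 1 - m).choose j : ℝ) * (m.choose (j + (ℓ+1)) : ℝ) * ((n:ℝ)^(ℓ+1+2*j))⁻¹
        ≤ ((n:ℝ)^j / (j.factorial : ℝ)) * ((n:ℝ)^(j+(ℓ+1)) / ((j+(ℓ+1)).factorial : ℝ)) * ((n:ℝ)^(ℓ+1+2*j))⁻¹ := by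
          gcongr <;> positivity
      _ = 1 / ((j.factorial : ℝ) * ((j+(ℓ+1)).factorial : ℝ)) := by
          field_simp
          rw [hpowmul]
      _ ≤ (1:ℝ)^j / (j.factorial : ℝ) * (1 / ((ℓ+1).factorial : ℝ)) := by
          rw [one_pow, div_mul_div_comm, one_mul]
          gcongr
    
  calc lamStar n m (ℓ+1)
      ≤ ∑ j ∈ Finset.range N, (1:ℝ)^j / (j.factorial : ℝ) * (1 / ((ℓ+1).factorial : ℝ)) :=
        Finset.sum_le_sum hterm
    _ = (∑ j ∈ Finset.range N, (1:ℝ)^j / (j.factorial : ℝ)) * (1 / ((ℓ+1).factorial : ℝ)) := by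
        rw [Finset.sum_mul]
    _ ≤ Real.exp 1 * (1 / ((ℓ+1).factorial : ℝ)) := by
        gcongr
        exact Real.sum_le_exp_of_nonneg zero_le_one N
    _ ≤ 3 / ((ℓ+1).factorial : ℝ) := by
        rw [div_eq_mul_one_div (3:ℝ)]
        have h3 : Real.exp 1 ≤ 3 := by linarith [Real.exp_one_lt_d9]
        gcongr

lemma sum_sq_lamStar_le (n m : ℕ) (hm : 1 ≤ m) (hmn : m ≤ n) :
    ∑ ℓ ∈ Finset.range m, ((ℓ:ℝ)+1)^2 * lamStar n m (ℓ+1) ≤ 24 := by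
  have hexp2 : Real.exp 2 ≤ 8 := by
    have h := Real.exp_one_lt_d9
    have h2 : Real.exp 2 = Real.exp 1 * Real.exp 1 := by
      rw [← Real.exp_add]; norm_num
    nlinarith [Real.exp_pos 1]
  calc ∑ ℓ ∈ Finset.range m, ((ℓ:ℝ)+1)^2 * lamStar n m (ℓ+1)
      ≤ ∑ ℓ ∈ Finset.range m, 3 * ((2:ℝ)^ℓ / (ℓ.factorial : ℝ)) := by
        refine Finset.sum_le_sum ?_
        intro ℓ _
        have hls := lamStar_le n m ℓ hm hmn
        have h1 : ((ℓ:ℝ)+1)^2 * lamStar n m (ℓ+1) ≤ ((ℓ:ℝ)+1)^2 * (3 / ((ℓ+1).factorial : ℝ)) := by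
          gcongr
        refine le_trans h1 ?_
        have hfs : (((ℓ+1).factorial) : ℝ) = ((ℓ:ℝ)+1) * (ℓ.factorial : ℝ) := by
          push_cast [Nat.factorial_succ]; ring
        have hfl : (0:ℝ) < (ℓ.factorial : ℝ) := by exact_mod_cast ℓ.factorial_pos
        have h2p : ((ℓ:ℝ)+1) ≤ 2^ℓ := by
          exact_mod_cast Nat.lt_two_pow_self (n := ℓ)
        rw [hfs]
        rw [show ((ℓ:ℝ)+1)^2 * (3 / (((ℓ:ℝ)+1) * (ℓ.factorial : ℝ))) = 3 * (((ℓ:ℝ)+1) / (ℓ.factorial : ℝ)) by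
          field_simp]
        gcongr
    _ = 3 * ∑ ℓ ∈ Finset.range m, (2:ℝ)^ℓ / (ℓ.factorial : ℝ) := by rw [Finset.mul_sum]
    _ ≤ 3 * Real.exp 2 := by
        gcongr
        exact Real.sum_le_exp_of_nonneg (by norm_num) m
    _ ≤ 24 := by linarith



/-- Lemma 5 of the paper. -/
theorem smooth_sum_approximation (φ : ℝ → ℝ) (hφ : ContDiffOn ℝ 2 φ (Set.Icc 0 1)) :
    ∃ C : ℝ, 0 < C ∧ ∀ n : ℕ, 1 ≤ n → ∀ m : ℕ, 1 ≤ m → m ≤ n →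
      |∑ ℓ ∈ Finset.range m, lamStar n m (ℓ+1) *
            (φ ((m:ℝ)/n) - φ (((m - (ℓ+1) : ℕ) : ℝ)/n))
          - (derivWithin φ (Set.Icc 0 1) ((m:ℝ)/n) / n)
              * ∑ ℓ ∈ Finset.range m, ((ℓ:ℝ)+1) * lamStar n m (ℓ+1)|
        ≤ C / n^2 := by
  obtain ⟨K, hK0, hK⟩ := taylor_bound φ hφ
  refine ⟨24 * K, by positivity, ?_⟩
  intro n hn m hm hmn
  have hn0 : (0:ℝ) < n := by exact_mod_cast hn
  set x : ℝ := (m:ℝ)/n with hxdef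
  have hx : x ∈ Set.Icc (0:ℝ) 1 := by
    constructor
    · positivity
    · rw [hxdef, div_le_one hn0]; exact_mod_cast hmn
  set d := derivWithin φ (Set.Icc 0 1) x with hd
  have key : ∀ ℓ ∈ Finset.range m,
      |φ x - φ (((m - (ℓ+1) : ℕ) : ℝ)/n) - d * (((ℓ:ℝ)+1)/n)| ≤ K * (((ℓ:ℝ)+1)/n)^2 := by
    intro ℓ hℓ
    have hl : ℓ + 1 ≤ m := Finset.mem_range.mp hℓ
    have hcast : ((m - (ℓ+1) : ℕ) : ℝ) = (m:ℝ) - ((ℓ:ℝ)+1) := by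
      rw [Nat.cast_sub hl]; push_cast; ring
    set y : ℝ := ((m:ℝ) - ((ℓ:ℝ)+1))/n with hydef
    have hmcast : ((ℓ:ℝ)+1) ≤ (m:ℝ) := by exact_mod_cast hl
    have hy : y ∈ Set.Icc (0:ℝ) 1 := by
      constructor
      · rw [hydef]; apply div_nonneg _ (le_of_lt hn0); linarith
      · rw [hydef, div_le_one hn0]
        have : (m:ℝ) ≤ n := by exact_mod_cast hmn
        linarith
    have hyx : y ≤ x := by
      rw [hydef, hxdef]; gcongr; linarith
    have hxy : x - y = ((ℓ:ℝ)+1)/n := by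
      rw [hxdef, hydef, div_sub_div_same]; congr 1; ring
    rw [hcast]
    have h := hK x hx y hy hyx
    rw [hxy] at h
    exact h
  have hrw : ∑ ℓ ∈ Finset.range m, lamStar n m (ℓ+1) * (φ x - φ (((m - (ℓ+1) : ℕ) : ℝ)/n))
        - (d / n) * ∑ ℓ ∈ Finset.range m, ((ℓ:ℝ)+1) * lamStar n m (ℓ+1)
      = ∑ ℓ ∈ Finset.range m, lamStar n m (ℓ+1) *
          (φ x - φ (((m - (ℓ+1) : ℕ) : ℝ)/n) - d * (((ℓ:ℝ)+1)/n)) := by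
    rw [Finset.mul_sum, ← Finset.sum_sub_distrib]
    exact Finset.sum_congr rfl fun ℓ _ => by ring
  rw [hrw]
  calc |∑ ℓ ∈ Finset.range m, lamStar n m (ℓ+1) *
          (φ x - φ (((m - (ℓ+1) : ℕ) : ℝ)/n) - d * (((ℓ:ℝ)+1)/n))|
      ≤ ∑ ℓ ∈ Finset.range m, |lamStar n m (ℓ+1) *
          (φ x - φ (((m - (ℓ+1) : ℕ) : ℝ)/n) - d * (((ℓ:ℝ)+1)/n))| :=
        Finset.abs_sum_le_sum_abs _ _
    _ ≤ ∑ ℓ ∈ Finset.range m, lamStar n m (ℓ+1) * (K * (((ℓ:ℝ)+1)/n)^2) := by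
        refine Finset.sum_le_sum fun ℓ hℓ => ?_
        rw [abs_mul, abs_of_nonneg (lamStar_nonneg n m (ℓ+1))]
        exact mul_le_mul_of_nonneg_left (key ℓ hℓ) (lamStar_nonneg n m (ℓ+1))
    _ = (K / n^2) * ∑ ℓ ∈ Finset.range m, ((ℓ:ℝ)+1)^2 * lamStar n m (ℓ+1) := by
        rw [Finset.mul_sum]
        refine Finset.sum_congr rfl fun ℓ _ => ?_
        field_simp
    _ ≤ (K / n^2) * 24 :=
        mul_le_mul_of_nonneg_left (sum_sq_lamStar_le n m hm hmn) (by positivity)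
    _ = 24 * K / n^2 := by ring


end EA
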